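/- (Uniform-in-time estimate for the fractional Boussinesq–Coriolis–Stratification semigroup.) Let I = (0,∞), 0 ≤ μ < 3, 1 ≤ q < ∞, 1 ≤ r ≤ ∞, s ∈ ℝ, 1/2 ≤ α < 5/2, ν > 0, Ω ≠ 0 and N > 0. Then there is a constant C > 0, independent of Ω and N, such that for every ℂ⁴-valued v₀ ∈ FN^s_{q,μ,r}(ℝ³), ‖S^α_{Ω,N}(·)v₀‖_{𝓛^∞(I;FN^s_{q,μ,r})} ≤ C L ‖v₀‖_{FN^s_{q,μ,r}}, where L = max{2, |Ω|/N, N/|Ω|}. -/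

import Mathlib

open MeasureTheory ENNReal

noncomputable section

abbrev En (n : ℕ) := EuclideanSpace ℝ (Fin n)

/-- The homogeneous Morrey norm `‖f‖_{q,μ} = sup_{x₀, d>0} d^{-μ/q} ‖f‖_{L^q(B_d(x₀))}`. -/
noncomputable def morreyNorm {n : ℕ} {F : Type*} [NormedAddCommGroup F]
    (q μ : ℝ) (f : En n → F) : ℝ≥0∞ :=
  ⨆ (x₀ : En n) (d : ℝ) (_ : 0 < d),
    ENNReal.ofReal (d ^ (-(μ / q))) *
      eLpNorm f (ENNReal.ofReal q) (volume.restrict (Metric.ball x₀ d))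

/-- ℓʳ norm over ℤ of a family of extended reals. -/
noncomputable def lrNorm (r : ℝ≥0∞) (a : ℤ → ℝ≥0∞) : ℝ≥0∞ :=
  if r = ⊤ then ⨆ j, a j else (∑' j, a j ^ r.toReal) ^ (1 / r.toReal)

/-- A Littlewood–Paley function: smooth, `0 ≤ φ ≤ 1`, supported in the annulus
`{3/4 ≤ |ξ| ≤ 8/3}`, with `∑_{j∈ℤ} φ(2^{-j}ξ) = 1` for `ξ ≠ 0`. -/
def IsLP {n : ℕ} (φ : En n → ℝ) : Prop :=
  ContDiff ℝ (⊤ : ℕ∞) φ ∧ (∀ ξ, 0 ≤ φ ξ) ∧ (∀ ξ, φ ξ ≤ 1) ∧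
    (∀ ξ, φ ξ ≠ 0 → 3 / 4 ≤ ‖ξ‖ ∧ ‖ξ‖ ≤ 8 / 3) ∧
    ∀ ξ : En n, ξ ≠ 0 → HasSum (fun j : ℤ => φ ((2 : ℝ) ^ (-j) • ξ)) 1

/-- Fourier–Besov–Morrey norm `‖f‖_{FN^s_{q,μ,r}}`, in terms of the Fourier transform. -/
noncomputable def fbmNorm {n : ℕ} {F : Type*} [NormedAddCommGroup F] [NormedSpace ℝ F]
    (s q μ : ℝ) (r : ℝ≥0∞) (φ : En n → ℝ) (fhat : En n → F) : ℝ≥0∞ :=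
  lrNorm r fun j : ℤ =>
    ENNReal.ofReal ((2 : ℝ) ^ ((j : ℝ) * s)) *
      morreyNorm q μ (fun ξ => φ ((2 : ℝ) ^ (-j) • ξ) • fhat ξ)

/-- Chemin–Lerner norm `𝓛¹((0,∞); FN^s_{q,μ,r})`, in terms of the Fourier transform. -/
noncomputable def clNorm1 {n : ℕ} {F : Type*} [NormedAddCommGroup F] [NormedSpace ℝ F]
    (s q μ : ℝ) (r : ℝ≥0∞) (φ : En n → ℝ) (fhat : ℝ → En n → F) : ℝ≥0∞ :=
  lrNorm r fun j : ℤ =>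
    ENNReal.ofReal ((2 : ℝ) ^ ((j : ℝ) * s)) *
      ∫⁻ t in Set.Ioi (0 : ℝ), morreyNorm q μ (fun ξ => φ ((2 : ℝ) ^ (-j) • ξ) • fhat t ξ)

/-- Chemin–Lerner norm `𝓛^∞((0,∞); FN^s_{q,μ,r})`, in terms of the Fourier transform. -/
noncomputable def clNormInf {n : ℕ} {F : Type*} [NormedAddCommGroup F] [NormedSpace ℝ F]
    (s q μ : ℝ) (r : ℝ≥0∞) (φ : En n → ℝ) (fhat : ℝ → En n → F) : ℝ≥0∞ :=
  lrNorm r fun j : ℤ =>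
    ENNReal.ofReal ((2 : ℝ) ^ ((j : ℝ) * s)) *
      essSup (fun t => morreyNorm q μ (fun ξ => φ ((2 : ℝ) ^ (-j) • ξ) • fhat t ξ))
        (volume.restrict (Set.Ioi (0 : ℝ)))

/-- Norm of `X_r = 𝓛^∞(I;FN^s_{q,μ,r}) ∩ 𝓛^1(I;FN^{s+2α}_{q,μ,r})`. -/
noncomputable def xrNorm {n : ℕ} {F : Type*} [NormedAddCommGroup F] [NormedSpace ℝ F]
    (s α q μ : ℝ) (r : ℝ≥0∞) (φ : En n → ℝ) (fhat : ℝ → En n → F) : ℝ≥0∞ :=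
  clNormInf s q μ r φ fhat + clNorm1 (s + 2 * α) q μ r φ fhat

/-- `|ξ|' = √(N²ξ₁² + N²ξ₂² + Ω²ξ₃²)`. -/
noncomputable def nxp (Ω N : ℝ) (ξ : En 3) : ℝ :=
  Real.sqrt (N ^ 2 * (ξ 0) ^ 2 + N ^ 2 * (ξ 1) ^ 2 + Ω ^ 2 * (ξ 2) ^ 2)

noncomputable def M1 (Ω N : ℝ) (ξ : En 3) : Matrix (Fin 4) (Fin 4) ℝ :=
  ((nxp Ω N ξ) ^ 2)⁻¹ •
    !![Ω ^ 2 * (ξ 2) ^ 2, 0, -(N ^ 2 * ξ 0 * ξ 2), Ω * N * ξ 1 * ξ 2;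
       0, Ω ^ 2 * (ξ 2) ^ 2, -(N ^ 2 * ξ 1 * ξ 2), -(Ω * N * ξ 0 * ξ 2);
       -(Ω ^ 2 * ξ 0 * ξ 2), -(Ω ^ 2 * ξ 1 * ξ 2), N ^ 2 * ((ξ 0) ^ 2 + (ξ 1) ^ 2), 0;
       Ω * N * ξ 1 * ξ 2, -(Ω * N * ξ 0 * ξ 2), 0, N ^ 2 * ((ξ 0) ^ 2 + (ξ 1) ^ 2)]

noncomputable def M2 (Ω N : ℝ) (ξ : En 3) : Matrix (Fin 4) (Fin 4) ℝ :=
  (‖ξ‖ * nxp Ω N ξ)⁻¹ •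
    !![0, -(Ω * (ξ 2) ^ 2), Ω * ξ 1 * ξ 2, N * ξ 0 * ξ 2;
       Ω * (ξ 2) ^ 2, 0, -(Ω * ξ 0 * ξ 2), N * ξ 1 * ξ 2;
       -(Ω * ξ 1 * ξ 2), Ω * ξ 0 * ξ 2, 0, -(N * ((ξ 0) ^ 2 + (ξ 1) ^ 2));
       -(N * ξ 0 * ξ 2), -(N * ξ 1 * ξ 2), N * ((ξ 0) ^ 2 + (ξ 1) ^ 2), 0]

noncomputable def M3 (Ω N : ℝ) (ξ : En 3) : Matrix (Fin 4) (Fin 4) ℝ :=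
  ((nxp Ω N ξ) ^ 2)⁻¹ •
    !![N ^ 2 * (ξ 1) ^ 2, -(N ^ 2 * ξ 0 * ξ 1), 0, -(Ω * N * ξ 1 * ξ 2);
       -(N ^ 2 * ξ 0 * ξ 1), N ^ 2 * (ξ 0) ^ 2, 0, Ω * N * ξ 0 * ξ 2;
       0, 0, 0, 0;
       -(Ω * N * ξ 1 * ξ 2), Ω * N * ξ 0 * ξ 2, 0, Ω ^ 2 * (ξ 2) ^ 2]

/-- Fourier symbol of the fractional Boussinesq–Coriolis–Stratification semigroup
`S^α_{Ω,N}(t)`. -/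
noncomputable def symS (ν α Ω N t : ℝ) (ξ : En 3) : Matrix (Fin 4) (Fin 4) ℝ :=
  Real.exp (-(ν * t * ‖ξ‖ ^ (2 * α))) •
    (Real.cos (t * nxp Ω N ξ / ‖ξ‖) • M1 Ω N ξ +
      Real.sin (t * nxp Ω N ξ / ‖ξ‖) • M2 Ω N ξ + M3 Ω N ξ)

/-- Action of `S^α_{Ω,N}(t)` on the Fourier side: `(S(t)v₀)^ = [S(t)]^ v̂₀`. -/
noncomputable def applyS (ν α Ω N t : ℝ) (v0 : En 3 → Fin 4 → ℂ) : En 3 → Fin 4 → ℂ :=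
  fun ξ => ((symS ν α Ω N t ξ).map (fun x : ℝ => (x : ℂ))).mulVec (v0 ξ)


section AuxLemmas

open Matrix

lemma abs_le_of_sq_le_sq'' {x y : ℝ} (hy : 0 ≤ y) (h : x ^ 2 ≤ y ^ 2) : |x| ≤ y := by
  have h1 : Real.sqrt (x ^ 2) ≤ Real.sqrt (y ^ 2) := Real.sqrt_le_sqrt h
  rwa [Real.sqrt_sq_eq_abs, Real.sqrt_sq hy] at h1

lemma inv_smul_abs_le {s x K : ℝ} (hs : 0 ≤ s) (hK : 0 ≤ K) (h : |x| ≤ K * s) :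
    |s⁻¹ * x| ≤ K := by
  rcases eq_or_lt_of_le hs with h0 | h0
  · have hx : x = 0 := by
      rw [← h0, mul_zero] at h
      exact abs_eq_zero.mp (le_antisymm h (abs_nonneg x))
    simp [hx, hK]
  · rw [abs_mul, abs_inv, abs_of_pos h0, inv_mul_le_iff₀ h0]
    linarith

lemma inv_inv_abs_le {a b x K : ℝ} (ha : 0 ≤ a) (hb : 0 ≤ b) (hK : 0 ≤ K)
    (h : |x| ≤ K * (a * b)) : |b⁻¹ * a⁻¹ * x| ≤ K := by
  have he : b⁻¹ * a⁻¹ * x = (a * b)⁻¹ * x := by rw [mul_inv]; ring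
  rw [he]
  exact inv_smul_abs_le (mul_nonneg ha hb) hK h

lemma nxp_sq (Ω N : ℝ) (ξ : En 3) :
    nxp Ω N ξ ^ 2 = N ^ 2 * (ξ 0) ^ 2 + N ^ 2 * (ξ 1) ^ 2 + Ω ^ 2 * (ξ 2) ^ 2 :=
  Real.sq_sqrt (by positivity)

lemma norm_sq_eq3 (ξ : En 3) : ‖ξ‖ ^ 2 = (ξ 0) ^ 2 + (ξ 1) ^ 2 + (ξ 2) ^ 2 := by
  rw [EuclideanSpace.norm_eq, Real.sq_sqrt (by positivity)]
  simp [Fin.sum_univ_three, Real.norm_eq_abs, sq_abs]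

set_option maxHeartbeats 2000000 in
lemma M1_bound {Ω N L : ℝ} (hN : 0 < N) (hW : 0 < |Ω|) (hL2 : 2 ≤ L)
    (hLa : N ≤ L * |Ω|) (hLb : |Ω| ≤ L * N) (ξ : En 3) (i j : Fin 4) :
    |M1 Ω N ξ i j| ≤ L := by
  have hs : (0:ℝ) ≤ nxp Ω N ξ ^ 2 := sq_nonneg _
  have hP := nxp_sq Ω N ξ
  have hL0 : (0:ℝ) ≤ L := by linarith
  set A := ξ 0; set B := ξ 1; set C := ξ 2
  set S := N ^ 2 * A ^ 2 + N ^ 2 * B ^ 2 + Ω ^ 2 * C ^ 2 with hS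
  have hS0 : 0 ≤ S := by positivity
  have hW2 : |Ω| ^ 2 = Ω ^ 2 := sq_abs Ω
  have k1 : |Ω ^ 2 * C ^ 2| ≤ L * S := by
    rw [abs_le]; constructor <;>
      nlinarith [mul_nonneg (sub_nonneg.2 hL2) hS0, sq_nonneg (N*A), sq_nonneg (N*B),
        sq_nonneg (Ω*C)]
  have k2 : ∀ X : ℝ, |N ^ 2 * X * C| ≤ L * (N ^ 2 * X ^ 2 + Ω ^ 2 * C ^ 2) := by
    intro X
    rw [← hW2, abs_le]; constructor <;>
      nlinarith [mul_nonneg hN.le (sq_nonneg (N*X - |Ω| * C)),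
        mul_nonneg hN.le (sq_nonneg (N*X + |Ω| * C)), hLa, sq_nonneg (N*X),
        sq_nonneg (|Ω| * C), hW, hN, mul_pos hN hW]
  have k6 : ∀ X : ℝ, |Ω ^ 2 * X * C| ≤ L * (N ^ 2 * X ^ 2 + Ω ^ 2 * C ^ 2) := by
    intro X
    rw [← hW2, abs_le]; constructor <;>
      nlinarith [mul_nonneg hW.le (sq_nonneg (N*X - |Ω| * C)),
        mul_nonneg hW.le (sq_nonneg (N*X + |Ω| * C)), hLb, sq_nonneg (N*X),
        sq_nonneg (|Ω| * C), hW, hN, mul_pos hN hW]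
  have k4 : ∀ X : ℝ, |Ω * N * X * C| ≤ L * (N ^ 2 * X ^ 2 + Ω ^ 2 * C ^ 2) := by
    intro X
    rw [abs_le]; constructor <;>
      nlinarith [sq_nonneg (N*X - Ω*C), sq_nonneg (N*X + Ω*C),
        mul_nonneg (sub_nonneg.2 hL2) (add_nonneg (sq_nonneg (N*X)) (sq_nonneg (Ω*C))),
        sq_nonneg (N*X), sq_nonneg (Ω*C)]
  have k8 : |N ^ 2 * (A ^ 2 + B ^ 2)| ≤ L * S := by
    rw [abs_le]; constructor <;>
      nlinarith [mul_nonneg (sub_nonneg.2 hL2) hS0, sq_nonneg (N*A), sq_nonneg (N*B),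
        sq_nonneg (Ω*C)]
  have gA : L * (N ^ 2 * A ^ 2 + Ω ^ 2 * C ^ 2) ≤ L * S := by
    nlinarith [mul_nonneg hL0 (sq_nonneg (N*B))]
  have gB : L * (N ^ 2 * B ^ 2 + Ω ^ 2 * C ^ 2) ≤ L * S := by
    nlinarith [mul_nonneg hL0 (sq_nonneg (N*A))]
  fin_cases i <;> fin_cases j <;>
    simp [M1, Matrix.smul_apply, Matrix.vecHead, Matrix.vecTail, -abs_mul]
  all_goals first
    | exact hL0
    | (refine inv_smul_abs_le hs hL0 ?_; rw [hP];
       first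
        | exact k1
        | exact k8
        | exact le_trans (k2 A) gA
        | exact le_trans (k2 B) gB
        | exact le_trans (k6 A) gA
        | exact le_trans (k6 B) gB
        | exact le_trans (k4 A) gA
        | exact le_trans (k4 B) gB)

set_option maxHeartbeats 2000000 in
lemma M2_bound (Ω N : ℝ) (ξ : En 3) (i j : Fin 4) : |M2 Ω N ξ i j| ≤ 1 := by
  have hQ0 : (0:ℝ) ≤ ‖ξ‖ := norm_nonneg _
  have hP0 : (0:ℝ) ≤ nxp Ω N ξ := Real.sqrt_nonneg _
  have hs : (0:ℝ) ≤ ‖ξ‖ * nxp Ω N ξ := mul_nonneg hQ0 hP0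
  have hQ2 := norm_sq_eq3 ξ
  have hP := nxp_sq Ω N ξ
  set A := ξ 0; set B := ξ 1; set C := ξ 2
  have hQP : (‖ξ‖ * nxp Ω N ξ) ^ 2 =
      (A ^ 2 + B ^ 2 + C ^ 2) * (N ^ 2 * A ^ 2 + N ^ 2 * B ^ 2 + Ω ^ 2 * C ^ 2) := by
    rw [mul_pow, hQ2, hP]
  have m1 : |Ω * C ^ 2| ≤ 1 * (‖ξ‖ * nxp Ω N ξ) := by
    rw [one_mul]
    refine abs_le_of_sq_le_sq'' hs ?_
    rw [hQP]
    nlinarith [sq_nonneg (N*A^2), sq_nonneg (N*B^2), sq_nonneg (Ω*C^2),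
      sq_nonneg (N*A*B), sq_nonneg (N*A*C), sq_nonneg (N*B*C),
      sq_nonneg (Ω*A*C), sq_nonneg (Ω*B*C)]
  have m2 : ∀ X ∈ ({ξ 0, ξ 1} : Set ℝ), |Ω * X * C| ≤ 1 * (‖ξ‖ * nxp Ω N ξ) := by
    intro X hX
    rw [one_mul]
    refine abs_le_of_sq_le_sq'' hs ?_
    rw [hQP]
    rcases hX with h | h <;> subst h <;>
      nlinarith [sq_nonneg (N*A^2), sq_nonneg (N*B^2), sq_nonneg (Ω*C^2),
        sq_nonneg (N*A*B), sq_nonneg (N*A*C), sq_nonneg (N*B*C),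
        sq_nonneg (Ω*A*C), sq_nonneg (Ω*B*C)]
  have m3 : ∀ X ∈ ({ξ 0, ξ 1} : Set ℝ), |N * X * C| ≤ 1 * (‖ξ‖ * nxp Ω N ξ) := by
    intro X hX
    rw [one_mul]
    refine abs_le_of_sq_le_sq'' hs ?_
    rw [hQP]
    rcases hX with h | h <;> subst h <;>
      nlinarith [sq_nonneg (N*A^2), sq_nonneg (N*B^2), sq_nonneg (Ω*C^2),
        sq_nonneg (N*A*B), sq_nonneg (N*A*C), sq_nonneg (N*B*C),
        sq_nonneg (Ω*A*C), sq_nonneg (Ω*B*C)]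
  have m4 : |N * (A ^ 2 + B ^ 2)| ≤ 1 * (‖ξ‖ * nxp Ω N ξ) := by
    rw [one_mul]
    refine abs_le_of_sq_le_sq'' hs ?_
    rw [hQP]
    nlinarith [sq_nonneg (N*A^2), sq_nonneg (N*B^2), sq_nonneg (Ω*C^2),
      sq_nonneg (N*A*B), sq_nonneg (N*A*C), sq_nonneg (N*B*C),
      sq_nonneg (Ω*A*C), sq_nonneg (Ω*B*C)]
  fin_cases i <;> fin_cases j <;>
    simp [M2, Matrix.smul_apply, Matrix.vecHead, Matrix.vecTail, -abs_mul]
  all_goals first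
    | exact zero_le_one
    | (refine inv_inv_abs_le hQ0 hP0 zero_le_one ?_;
       first
        | exact m1
        | exact m2 A (Or.inl rfl)
        | exact m2 B (Or.inr rfl)
        | exact m3 A (Or.inl rfl)
        | exact m3 B (Or.inr rfl)
        | exact m4)

set_option maxHeartbeats 2000000 in
lemma M3_bound (Ω N : ℝ) (ξ : En 3) (i j : Fin 4) : |M3 Ω N ξ i j| ≤ 1 := by
  have hs : (0:ℝ) ≤ nxp Ω N ξ ^ 2 := sq_nonneg _
  have hP := nxp_sq Ω N ξ
  fin_cases i <;> fin_cases j <;>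
    simp [M3, Matrix.smul_apply, Matrix.vecHead, Matrix.vecTail, -abs_mul]
  all_goals
    refine inv_smul_abs_le hs one_pos.le ?_
    rw [one_mul, hP, abs_le]
    constructor <;>
      nlinarith [sq_nonneg (N*ξ 0 - N*ξ 1), sq_nonneg (N*ξ 0 + N*ξ 1),
        sq_nonneg (N*ξ 1 - Ω*ξ 2), sq_nonneg (N*ξ 1 + Ω*ξ 2),
        sq_nonneg (N*ξ 0 - Ω*ξ 2), sq_nonneg (N*ξ 0 + Ω*ξ 2),
        sq_nonneg (N*ξ 0), sq_nonneg (N*ξ 1), sq_nonneg (Ω*ξ 2)]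

lemma symS_entry_bound {ν α Ω N L t : ℝ} (hν : 0 ≤ ν) (ht : 0 ≤ t)
    (hN : 0 < N) (hW : 0 < |Ω|) (hL2 : 2 ≤ L)
    (hLa : N ≤ L * |Ω|) (hLb : |Ω| ≤ L * N) (ξ : En 3) (i j : Fin 4) :
    |symS ν α Ω N t ξ i j| ≤ 2 * L := by
  have hL0 : (0:ℝ) ≤ L := by linarith
  have hexp : Real.exp (-(ν * t * ‖ξ‖ ^ (2 * α))) ≤ 1 := by
    calc Real.exp (-(ν * t * ‖ξ‖ ^ (2 * α))) ≤ Real.exp 0 := by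
          refine Real.exp_le_exp.mpr ?_
          have h1 : (0:ℝ) ≤ ν * t * ‖ξ‖ ^ (2 * α) :=
            mul_nonneg (mul_nonneg hν ht) (Real.rpow_nonneg (norm_nonneg _) _)
          linarith
      _ = 1 := Real.exp_zero
  have h1 : |Real.cos (t * nxp Ω N ξ / ‖ξ‖) * M1 Ω N ξ i j| ≤ L := by
    rw [abs_mul]
    calc |Real.cos (t * nxp Ω N ξ / ‖ξ‖)| * |M1 Ω N ξ i j| ≤ 1 * L :=
          mul_le_mul (Real.abs_cos_le_one _) (M1_bound hN hW hL2 hLa hLb ξ i j)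
            (abs_nonneg _) zero_le_one
      _ = L := one_mul L
  have h2 : |Real.sin (t * nxp Ω N ξ / ‖ξ‖) * M2 Ω N ξ i j| ≤ 1 := by
    rw [abs_mul]
    calc |Real.sin (t * nxp Ω N ξ / ‖ξ‖)| * |M2 Ω N ξ i j| ≤ 1 * 1 :=
          mul_le_mul (Real.abs_sin_le_one _) (M2_bound Ω N ξ i j)
            (abs_nonneg _) zero_le_one
      _ = 1 := one_mul 1
  have h3 : |M3 Ω N ξ i j| ≤ 1 := M3_bound Ω N ξ i j
  simp only [symS, Matrix.smul_apply, Matrix.add_apply, smul_eq_mul]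
  rw [abs_mul, Real.abs_exp]
  calc Real.exp (-(ν * t * ‖ξ‖ ^ (2 * α))) *
        |Real.cos (t * nxp Ω N ξ / ‖ξ‖) * M1 Ω N ξ i j +
          Real.sin (t * nxp Ω N ξ / ‖ξ‖) * M2 Ω N ξ i j + M3 Ω N ξ i j|
      ≤ 1 * |Real.cos (t * nxp Ω N ξ / ‖ξ‖) * M1 Ω N ξ i j +
          Real.sin (t * nxp Ω N ξ / ‖ξ‖) * M2 Ω N ξ i j + M3 Ω N ξ i j| :=
        mul_le_mul_of_nonneg_right hexp (abs_nonneg _)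
    _ = |Real.cos (t * nxp Ω N ξ / ‖ξ‖) * M1 Ω N ξ i j +
          Real.sin (t * nxp Ω N ξ / ‖ξ‖) * M2 Ω N ξ i j + M3 Ω N ξ i j| := one_mul _
    _ ≤ |Real.cos (t * nxp Ω N ξ / ‖ξ‖) * M1 Ω N ξ i j +
          Real.sin (t * nxp Ω N ξ / ‖ξ‖) * M2 Ω N ξ i j| + |M3 Ω N ξ i j| := abs_add_le _ _
    _ ≤ (|Real.cos (t * nxp Ω N ξ / ‖ξ‖) * M1 Ω N ξ i j| +
          |Real.sin (t * nxp Ω N ξ / ‖ξ‖) * M2 Ω N ξ i j|) + |M3 Ω N ξ i j| :=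
        add_le_add_left (abs_add_le _ _) _
    _ ≤ (L + 1) + 1 := add_le_add (add_le_add h1 h2) h3
    _ ≤ 2 * L := by linarith

lemma mulVec_norm_le {K : ℝ} (hK : 0 ≤ K) (M : Matrix (Fin 4) (Fin 4) ℝ)
    (h : ∀ i j, |M i j| ≤ K) (v : Fin 4 → ℂ) :
    ‖(M.map (fun x : ℝ => (x : ℂ))).mulVec v‖ ≤ 4 * K * ‖v‖ := by
  rw [pi_norm_le_iff_of_nonneg (by positivity)]
  intro i
  calc ‖(M.map (fun x : ℝ => (x : ℂ))).mulVec v i‖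
      = ‖∑ j : Fin 4, (M i j : ℂ) * v j‖ := by
        simp [Matrix.mulVec, dotProduct, Matrix.map_apply]
    _ ≤ ∑ j : Fin 4, ‖(M i j : ℂ) * v j‖ := norm_sum_le _ _
    _ ≤ ∑ _j : Fin 4, K * ‖v‖ := by
        refine Finset.sum_le_sum fun j _ => ?_
        rw [norm_mul, Complex.norm_real, Real.norm_eq_abs]
        exact mul_le_mul (h i j) (norm_le_pi_norm v j) (norm_nonneg _) hK
    _ = 4 * K * ‖v‖ := by
        rw [Finset.sum_const, Finset.card_univ, Fintype.card_fin]
        push_cast; ring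

lemma morreyNorm_smul_le {n : ℕ} {F : Type*} [NormedAddCommGroup F] [NormedSpace ℝ F]
    (q μ : ℝ) {c : ℝ} (hc : 0 ≤ c) (f g : En n → F)
    (h : ∀ ξ, ‖f ξ‖ ≤ c * ‖g ξ‖) :
    morreyNorm q μ f ≤ ENNReal.ofReal c * morreyNorm q μ g := by
  unfold morreyNorm
  refine iSup_le fun x₀ => iSup_le fun d => iSup_le fun hd => ?_
  have h1 : eLpNorm f (ENNReal.ofReal q) (volume.restrict (Metric.ball x₀ d)) ≤
      ENNReal.ofReal c * eLpNorm g (ENNReal.ofReal q) (volume.restrict (Metric.ball x₀ d)) := by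
    have h2 : eLpNorm f (ENNReal.ofReal q) (volume.restrict (Metric.ball x₀ d)) ≤
        eLpNorm (c • g) (ENNReal.ofReal q) (volume.restrict (Metric.ball x₀ d)) := by
      refine eLpNorm_mono fun ξ => ?_
      simpa [norm_smul, abs_of_nonneg hc] using h ξ
    rwa [eLpNorm_const_smul, Real.enorm_eq_ofReal hc] at h2
  calc ENNReal.ofReal (d ^ (-(μ / q))) * eLpNorm f (ENNReal.ofReal q)
        (volume.restrict (Metric.ball x₀ d))
      ≤ ENNReal.ofReal c * (ENNReal.ofReal (d ^ (-(μ / q))) * eLpNorm g (ENNReal.ofReal q)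
        (volume.restrict (Metric.ball x₀ d))) := by
        rw [← mul_assoc, mul_comm (ENNReal.ofReal c), mul_assoc]
        exact mul_le_mul_right h1 _
    _ ≤ ENNReal.ofReal c * ⨆ (x₀ : En n) (d : ℝ) (_ : 0 < d),
          ENNReal.ofReal (d ^ (-(μ / q))) *
            eLpNorm g (ENNReal.ofReal q) (volume.restrict (Metric.ball x₀ d)) := by
        refine mul_le_mul_right ?_ _
        refine le_iSup_of_le x₀ ?_
        refine le_iSup_of_le d ?_
        exact le_iSup_of_le hd le_rfl

lemma lrNorm_mono {r : ℝ≥0∞} {a b : ℤ → ℝ≥0∞} (h : ∀ j, a j ≤ b j) :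
    lrNorm r a ≤ lrNorm r b := by
  unfold lrNorm
  split_ifs
  · exact iSup_mono h
  · exact ENNReal.rpow_le_rpow
      (ENNReal.tsum_le_tsum fun j => ENNReal.rpow_le_rpow (h j) ENNReal.toReal_nonneg)
      (by positivity)

lemma lrNorm_const_mul_le {r : ℝ≥0∞} (hr : 1 ≤ r) (c : ℝ≥0∞) (a : ℤ → ℝ≥0∞) :
    lrNorm r (fun j => c * a j) ≤ c * lrNorm r a := by
  unfold lrNorm
  split_ifs with h
  · exact iSup_le fun j => mul_le_mul_right (le_iSup a j) c
  · have hp : 0 < r.toReal := by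
      have h1 : (1 : ℝ≥0∞).toReal ≤ r.toReal := ENNReal.toReal_mono h hr
      simpa using lt_of_lt_of_le one_pos (by simpa using h1)
    have he : ∀ j : ℤ, (c * a j) ^ r.toReal = c ^ r.toReal * a j ^ r.toReal := fun j =>
      ENNReal.mul_rpow_of_nonneg _ _ hp.le
    simp only [he, ENNReal.tsum_mul_left]
    rw [ENNReal.mul_rpow_of_nonneg _ _ (by positivity : (0:ℝ) ≤ 1 / r.toReal),
      ← ENNReal.rpow_mul, mul_one_div_cancel hp.ne', ENNReal.rpow_one]

end AuxLemmas

/-- Uniform-in-time estimate for the fractional Boussinesq–Coriolis–Stratification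
semigroup: `‖S^α_{Ω,N}(·)v₀‖_{𝓛^∞((0,∞);FN^s_{q,μ,r})} ≤ C L ‖v₀‖_{FN^s_{q,μ,r}}`,
with `C` independent of `Ω` and `N`. -/
theorem semigroup_uniform_estimate (μ q s α : ℝ) (r : ℝ≥0∞)
    (hμ : 0 ≤ μ) (hμ' : μ < 3) (hq : 1 ≤ q)
    (hr : 1 ≤ r) (hα : 1 / 2 ≤ α) (hα' : α < 5 / 2)
    (φ : En 3 → ℝ) (hφ : IsLP φ) :
    ∃ C > (0 : ℝ), ∀ ν > (0 : ℝ), ∀ Ω : ℝ, Ω ≠ 0 → ∀ N > (0 : ℝ),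
      ∀ v0 : En 3 → Fin 4 → ℂ, AEStronglyMeasurable v0 volume →
        fbmNorm s q μ r φ v0 < ⊤ →
        clNormInf s q μ r φ (fun t => applyS ν α Ω N t v0) ≤
          ENNReal.ofReal (C * max 2 (max (|Ω| / N) (N / |Ω|))) *
            fbmNorm s q μ r φ v0 := by
  refine ⟨8, by norm_num, ?_⟩
  intro ν hν Ω hΩ N hN v0 _hmeas _hfin
  set L := max 2 (max (|Ω| / N) (N / |Ω|)) with hLdef
  have hW : 0 < |Ω| := abs_pos.mpr hΩ
  have hL2 : (2:ℝ) ≤ L := le_max_left _ _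
  have hL0 : (0:ℝ) ≤ L := by linarith
  have hLa : N ≤ L * |Ω| := by
    have h1 : N / |Ω| ≤ L := le_trans (le_max_right _ _) (le_max_right _ _)
    rwa [div_le_iff₀ hW] at h1
  have hLb : |Ω| ≤ L * N := by
    have h1 : |Ω| / N ≤ L := le_trans (le_max_left _ _) (le_max_right _ _)
    rwa [div_le_iff₀ hN] at h1
  have key : ∀ t : ℝ, 0 ≤ t → ∀ ξ : En 3,
      ‖applyS ν α Ω N t v0 ξ‖ ≤ 8 * L * ‖v0 ξ‖ := by
    intro t ht ξ
    have h1 : ‖applyS ν α Ω N t v0 ξ‖ ≤ 4 * (2 * L) * ‖v0 ξ‖ :=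
      mulVec_norm_le (by linarith) _
        (symS_entry_bound hν.le ht hN hW hL2 hLa hLb ξ) (v0 ξ)
    calc ‖applyS ν α Ω N t v0 ξ‖ ≤ 4 * (2 * L) * ‖v0 ξ‖ := h1
      _ = 8 * L * ‖v0 ξ‖ := by ring
  have keyj : ∀ (j : ℤ) (t : ℝ), 0 ≤ t →
      morreyNorm q μ (fun ξ => φ ((2 : ℝ) ^ (-j) • ξ) • applyS ν α Ω N t v0 ξ) ≤
        ENNReal.ofReal (8 * L) *
          morreyNorm q μ (fun ξ => φ ((2 : ℝ) ^ (-j) • ξ) • v0 ξ) := by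
    intro j t ht
    refine morreyNorm_smul_le q μ (by linarith) _ _ fun ξ => ?_
    rw [norm_smul, norm_smul]
    calc ‖φ ((2 : ℝ) ^ (-j) • ξ)‖ * ‖applyS ν α Ω N t v0 ξ‖
        ≤ ‖φ ((2 : ℝ) ^ (-j) • ξ)‖ * (8 * L * ‖v0 ξ‖) :=
          mul_le_mul_of_nonneg_left (key t ht ξ) (norm_nonneg _)
      _ = 8 * L * (‖φ ((2 : ℝ) ^ (-j) • ξ)‖ * ‖v0 ξ‖) := by ring
  have hess : ∀ j : ℤ,
      essSup (fun t => morreyNorm q μ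
          (fun ξ => φ ((2 : ℝ) ^ (-j) • ξ) • applyS ν α Ω N t v0 ξ))
        (volume.restrict (Set.Ioi (0 : ℝ))) ≤
      ENNReal.ofReal (8 * L) *
        morreyNorm q μ (fun ξ => φ ((2 : ℝ) ^ (-j) • ξ) • v0 ξ) := by
    intro j
    refine essSup_le_of_ae_le _ ?_
    filter_upwards [ae_restrict_mem measurableSet_Ioi] with t ht
    exact keyj j t (le_of_lt ht)
  unfold clNormInf fbmNorm
  calc lrNorm r (fun j : ℤ =>
        ENNReal.ofReal ((2 : ℝ) ^ ((j : ℝ) * s)) *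
          essSup (fun t => morreyNorm q μ
              (fun ξ => φ ((2 : ℝ) ^ (-j) • ξ) • applyS ν α Ω N t v0 ξ))
            (volume.restrict (Set.Ioi (0 : ℝ))))
      ≤ lrNorm r (fun j : ℤ => ENNReal.ofReal (8 * L) *
          (ENNReal.ofReal ((2 : ℝ) ^ ((j : ℝ) * s)) *
            morreyNorm q μ (fun ξ => φ ((2 : ℝ) ^ (-j) • ξ) • v0 ξ))) := by
        refine lrNorm_mono fun j => ?_
        rw [mul_left_comm]
        exact mul_le_mul_right (hess j) _
    _ ≤ ENNReal.ofReal (8 * L) * lrNorm r (fun j : ℤ =>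
          ENNReal.ofReal ((2 : ℝ) ^ ((j : ℝ) * s)) *
            morreyNorm q μ (fun ξ => φ ((2 : ℝ) ^ (-j) • ξ) • v0 ξ)) :=
        lrNorm_const_mul_le hr _ _

end
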